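/- Let φ : ℤ^d → ℤ be a positive definite quadratic function with Hessian β, let τ ∈ ℂ with Im τ > 0, and let u ∈ ℝ^d satisfy β(u, m) ∈ ℤ for all m ∈ ℤ^d. Then the theta series θ_u(τ,z) = Σ_{v ∈ ℤ^d} exp(2πi(−β(z, u+v) + φ(u+v)τ)) converges absolutely for every z ∈ ℂ^d, and satisfies the functional equation θ_u(τ, z + m₁τ + m₂) = θ_u(τ, z) · exp(2πi(−β(z,m₁) − φ(m₁)τ)) for all m₁, m₂ ∈ ℤ^d. -/

import Mathlib

open Complex

/-- `β(z,w) = Σ cᵢⱼ zᵢ wⱼ`, extended `ℂ`-bilinearly. -/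
noncomputable def betaCC {d : ℕ} (c : Matrix (Fin d) (Fin d) ℤ) (z w : Fin d → ℂ) : ℂ :=
  ∑ i, ∑ j, (c i j : ℂ) * z i * w j

/-- `φ(z) = (1/2) Σ cᵢⱼ zᵢ zⱼ`. -/
noncomputable def phiCC {d : ℕ} (c : Matrix (Fin d) (Fin d) ℤ) (z : Fin d → ℂ) : ℂ :=
  (1 / 2 : ℂ) * betaCC c z z

/-- `β` on real vectors. -/
def betaRR {d : ℕ} (c : Matrix (Fin d) (Fin d) ℤ) (x y : Fin d → ℝ) : ℝ :=
  ∑ i, ∑ j, (c i j : ℝ) * x i * y j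

/-- The general term of the theta series `θ_u(τ,z)`:
`v ↦ exp(2πi(-β(z, u+v) + φ(u+v)τ))`. -/
noncomputable def thetaTerm {d : ℕ} (c : Matrix (Fin d) (Fin d) ℤ)
    (u : Fin d → ℝ) (τ : ℂ) (z : Fin d → ℂ) (v : Fin d → ℤ) : ℂ :=
  Complex.exp (2 * Real.pi * Complex.I *
    (-betaCC c z (fun i => (u i : ℂ) + (v i : ℂ)) +
      phiCC c (fun i => (u i : ℂ) + (v i : ℂ)) * τ))

section Aux

variable {d : ℕ} (c : Matrix (Fin d) (Fin d) ℤ)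

lemma betaCC_add_left (z₁ z₂ w : Fin d → ℂ) :
    betaCC c (fun i => z₁ i + z₂ i) w = betaCC c z₁ w + betaCC c z₂ w := by
  simp only [betaCC, ← Finset.sum_add_distrib]
  exact Finset.sum_congr rfl fun i _ => Finset.sum_congr rfl fun j _ => by ring

lemma betaCC_add_right (z w₁ w₂ : Fin d → ℂ) :
    betaCC c z (fun i => w₁ i + w₂ i) = betaCC c z w₁ + betaCC c z w₂ := by
  simp only [betaCC, ← Finset.sum_add_distrib]
  exact Finset.sum_congr rfl fun i _ => Finset.sum_congr rfl fun j _ => by ring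

lemma betaCC_sub_right (z w₁ w₂ : Fin d → ℂ) :
    betaCC c z (fun i => w₁ i - w₂ i) = betaCC c z w₁ - betaCC c z w₂ := by
  simp only [betaCC, ← Finset.sum_sub_distrib]
  exact Finset.sum_congr rfl fun i _ => Finset.sum_congr rfl fun j _ => by ring

lemma betaCC_sub_left (z₁ z₂ w : Fin d → ℂ) :
    betaCC c (fun i => z₁ i - z₂ i) w = betaCC c z₁ w - betaCC c z₂ w := by
  simp only [betaCC, ← Finset.sum_sub_distrib]
  exact Finset.sum_congr rfl fun i _ => Finset.sum_congr rfl fun j _ => by ring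

lemma betaCC_smul_left (a : ℂ) (z w : Fin d → ℂ) :
    betaCC c (fun i => z i * a) w = a * betaCC c z w := by
  simp only [betaCC, Finset.mul_sum]
  exact Finset.sum_congr rfl fun i _ => Finset.sum_congr rfl fun j _ => by ring

lemma betaCC_comm (hsymm : ∀ i j, c i j = c j i) (z w : Fin d → ℂ) :
    betaCC c z w = betaCC c w z := by
  simp only [betaCC]
  rw [Finset.sum_comm]
  exact Finset.sum_congr rfl fun i _ => Finset.sum_congr rfl fun j _ => by
    rw [hsymm j i]; ring

lemma betaCC_real (x y : Fin d → ℝ) :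
    betaCC c (fun i => (x i : ℂ)) (fun i => (y i : ℂ)) = (betaRR c x y : ℂ) := by
  simp only [betaCC, betaRR]
  push_cast
  rfl

lemma betaCC_int_int (m v : Fin d → ℤ) :
    betaCC c (fun i => (m i : ℂ)) (fun i => (v i : ℂ))
      = ((∑ i, ∑ j, c i j * m i * v j : ℤ) : ℂ) := by
  simp only [betaCC]
  push_cast
  rfl

lemma phiCC_sub (hsymm : ∀ i j, c i j = c j i) (w m : Fin d → ℂ) :
    phiCC c (fun i => w i - m i)
      = phiCC c w - betaCC c m w + phiCC c m := by
  simp only [phiCC]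
  rw [betaCC_sub_left, betaCC_sub_right, betaCC_sub_right,
    betaCC_comm c hsymm w m]
  ring

lemma betaRR_smul (t : ℝ) (x : Fin d → ℝ) :
    betaRR c (fun i => t * x i) (fun i => t * x i) = t^2 * betaRR c x x := by
  simp only [betaRR, Finset.mul_sum]
  exact Finset.sum_congr rfl fun i _ => Finset.sum_congr rfl fun j _ => by ring

lemma exists_posdef_bound (hpos : ∀ w : Fin d → ℝ, w ≠ 0 → 0 < betaRR c w w) :
    ∃ ε > 0, ∀ w : Fin d → ℝ, ε * (∑ j, (w j)^2) ≤ betaRR c w w := by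
  rcases Nat.eq_zero_or_pos d with hd | hd
  · refine ⟨1, one_pos, fun w => ?_⟩
    subst hd
    simp [betaRR]
  have hQcont : Continuous (fun w : Fin d → ℝ => ∑ j, (w j)^2) :=
    continuous_finset_sum _ fun j _ => (continuous_apply j).pow 2
  have hβcont : Continuous (fun w : Fin d → ℝ => betaRR c w w) := by
    unfold betaRR
    exact continuous_finset_sum _ fun i _ => continuous_finset_sum _ fun j _ =>
      (continuous_const.mul (continuous_apply i)).mul (continuous_apply j)
  set S : Set (Fin d → ℝ) := {w | ∑ j, (w j)^2 = 1} with hS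
  have hSc : IsCompact S := by
    have hclosed : IsClosed S := isClosed_eq hQcont continuous_const
    have hbdd : Bornology.IsBounded S := by
      apply Bornology.IsBounded.subset
        (Metric.isBounded_closedBall (x := (0 : Fin d → ℝ)) (r := 1))
      intro w hw
      simp only [Metric.mem_closedBall, dist_zero_right]
      rw [pi_norm_le_iff_of_nonneg zero_le_one]
      intro j
      rw [Real.norm_eq_abs, abs_le_one_iff_mul_self_le_one, ← sq]
      calc (w j)^2 ≤ ∑ j', (w j')^2 :=
            Finset.single_le_sum (f := fun j' => (w j')^2) (fun j' _ => sq_nonneg _)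
              (Finset.mem_univ j)
        _ = 1 := hw
    exact Metric.isCompact_of_isClosed_isBounded hclosed hbdd
  have hSne : S.Nonempty := by
    refine ⟨fun j => if j = ⟨0, hd⟩ then 1 else 0, ?_⟩
    simp [hS, Finset.sum_ite_eq', sq]
  obtain ⟨w₀, hw₀S, hw₀min'⟩ := hSc.exists_isMinOn hSne hβcont.continuousOn
  have hw₀min : ∀ w ∈ S, betaRR c w₀ w₀ ≤ betaRR c w w := fun w hw => hw₀min' hw
  have hw₀ne : w₀ ≠ 0 := by
    intro h0
    rw [hS] at hw₀S
    simp [h0] at hw₀S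
  refine ⟨betaRR c w₀ w₀, hpos w₀ hw₀ne, fun w => ?_⟩
  by_cases hw : w = 0
  · simp [hw, betaRR]
  · have hQpos : 0 < ∑ j, (w j)^2 := by
      have : ∃ j, w j ≠ 0 := by
        by_contra hcon
        push_neg at hcon
        exact hw (funext fun j => hcon j)
      obtain ⟨j, hj⟩ := this
      exact Finset.sum_pos' (fun j' _ => sq_nonneg _)
        ⟨j, Finset.mem_univ j, by positivity⟩
    set t : ℝ := Real.sqrt (∑ j, (w j)^2) with ht
    have htpos : 0 < t := Real.sqrt_pos.mpr hQpos
    have hmem : (fun i => t⁻¹ * w i) ∈ S := by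
      rw [hS, Set.mem_setOf_eq]
      have : ∑ j, (t⁻¹ * w j)^2 = t⁻¹^2 * ∑ j, (w j)^2 := by
        rw [Finset.mul_sum]; exact Finset.sum_congr rfl fun j _ => by ring
      rw [this, ht, ← Real.sqrt_inv, Real.sq_sqrt (by positivity)]
      field_simp
    have hb := hw₀min _ hmem
    have hsmul := betaRR_smul c t⁻¹ w
    have ht2 : t^2 = ∑ j, (w j)^2 := Real.sq_sqrt hQpos.le
    have hww : betaRR c w w
        = t^2 * betaRR c (fun i => t⁻¹ * w i) (fun i => t⁻¹ * w i) := by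
      rw [hsmul]
      field_simp
    rw [hww, ht2]
    calc betaRR c w₀ w₀ * (∑ j, (w j)^2)
        ≤ betaRR c (fun i => t⁻¹ * w i) (fun i => t⁻¹ * w i) * (∑ j, (w j)^2) :=
          mul_le_mul_of_nonneg_right hb hQpos.le
      _ = (∑ j, (w j)^2) * betaRR c (fun i => t⁻¹ * w i) (fun i => t⁻¹ * w i) := by
          ring

end Aux

lemma summable_pi_prod {d : ℕ} (f : Fin d → ℤ → ℝ) (hf : ∀ i, Summable (f i))
    (hnn : ∀ i n, 0 ≤ f i n) : Summable (fun v : Fin d → ℤ => ∏ i, f i (v i)) := by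
  induction d with
  | zero => simpa using (Summable.of_finite : Summable (fun _ : Fin 0 → ℤ => (1:ℝ)))
  | succ d ih =>
      have ihs := ih (fun i => f i.succ) (fun i => hf i.succ) (fun i n => hnn i.succ n)
      obtain ⟨g, hg⟩ : ∃ g : ℤ → ℝ, g = f 0 := ⟨_, rfl⟩
      obtain ⟨h, hh⟩ : ∃ h : (Fin d → ℤ) → ℝ, h = fun w => ∏ i, f i.succ (w i) := ⟨_, rfl⟩
      have hf0 : (0:ℤ → ℝ) ≤ g := hg ▸ fun n => hnn 0 n
      have hg0 : (0:(Fin d → ℤ) → ℝ) ≤ h :=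
        hh ▸ fun w => Finset.prod_nonneg fun i _ => hnn i.succ (w i)
      have h2 : Summable (fun p : ℤ × (Fin d → ℤ) => g p.1 * h p.2) :=
        Summable.mul_of_nonneg (hg ▸ hf 0) (hh ▸ ihs) hf0 hg0
      rw [hg, hh] at h2
      rw [← (Fin.consEquiv (fun _ : Fin (d+1) => ℤ)).summable_iff]
      exact h2.congr fun p => by
        rw [Function.comp_apply, Fin.prod_univ_succ]
        simp [Fin.consEquiv]

lemma summable_onedim {a b : ℝ} (ha : 0 ≤ a) (hb : 0 < b) (x : ℝ) :
    Summable (fun n : ℤ => Real.exp (a * |x + n| - b * (x + n)^2)) := by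
  have hT : 0 < b / Real.pi := div_pos hb Real.pi_pos
  apply Summable.of_nonneg_of_le (fun n => (Real.exp_pos _).le)
    (fun n => ?_)
    ((summable_pow_mul_jacobiTheta₂_term_bound ((a + 2*b*|x|)/(2*Real.pi)) hT 0).mul_left
      (Real.exp (a * |x|)))
  simp only [pow_zero, one_mul, ← Real.exp_add]
  rw [Real.exp_le_exp]
  have habs : |(n:ℝ)| = ((|n| : ℤ) : ℝ) := by push_cast; rfl
  have h1 : a * |x + (n:ℝ)| ≤ a * |x| + a * |(n:ℝ)| := by
    calc a * |x + (n:ℝ)| ≤ a * (|x| + |(n:ℝ)|) :=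
          mul_le_mul_of_nonneg_left (abs_add_le x (n:ℝ)) ha
      _ = a * |x| + a * |(n:ℝ)| := by ring
  have h2 : (n:ℝ)^2 - 2 * |x| * |(n:ℝ)| ≤ (x + n)^2 := by
    have hx : -(2 * |x| * |(n:ℝ)|) ≤ 2 * x * n := by
      have h3 : |2 * x * (n:ℝ)| = 2 * |x| * |(n:ℝ)| := by
        rw [abs_mul, abs_mul]; norm_num
      linarith [neg_abs_le (2 * x * (n:ℝ)), h3.symm.le]
    nlinarith [sq_nonneg x]
  have hpi : -Real.pi * ((b/Real.pi) * ((n:ℝ))^2 - 2 * ((a + 2*b*|x|)/(2*Real.pi)) * |(n:ℝ)|)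
      = -(b*(n:ℝ)^2) + (a + 2*b*|x|) * |(n:ℝ)| := by
    field_simp
    ring
  rw [← habs, hpi]
  nlinarith [mul_le_mul_of_nonneg_left h2 hb.le]

lemma norm_thetaTerm {d : ℕ} (c : Matrix (Fin d) (Fin d) ℤ)
    (u : Fin d → ℝ) (τ : ℂ) (z : Fin d → ℂ) (v : Fin d → ℤ) :
    ‖thetaTerm c u τ z v‖ = Real.exp
      (2 * Real.pi * (betaCC c z (fun i => (u i : ℂ) + (v i : ℂ))).im
        - Real.pi * betaRR c (fun i => u i + v i) (fun i => u i + v i) * τ.im) := by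
  rw [thetaTerm, Complex.norm_exp]
  congr 1
  have hW : (fun i => ((u i : ℂ) + (v i : ℂ))) = fun i => ((u i + (v i : ℝ) : ℝ) : ℂ) := by
    funext i; push_cast; ring
  have hphi : phiCC c (fun i => (u i : ℂ) + (v i : ℂ))
      = (((1:ℝ)/2 * betaRR c (fun i => u i + v i) (fun i => u i + v i) : ℝ) : ℂ) := by
    rw [phiCC, hW, betaCC_real]
    push_cast
    ring
  rw [hphi]
  set β := betaCC c z (fun i => (u i : ℂ) + (v i : ℂ))
  set r : ℝ := (1:ℝ)/2 * betaRR c (fun i => u i + v i) (fun i => u i + v i) with hr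
  simp [Complex.mul_re, Complex.mul_im]
  ring

lemma im_betaCC_le {d : ℕ} (c : Matrix (Fin d) (Fin d) ℤ) (z : Fin d → ℂ) (w : Fin d → ℝ) :
    (betaCC c z (fun i => (w i : ℂ))).im
      ≤ (∑ i, ∑ j, |(c i j : ℝ)| * ‖z i‖) * ∑ j, |w j| := by
  calc (betaCC c z (fun i => (w i : ℂ))).im
      ≤ ‖betaCC c z (fun i => (w i : ℂ))‖ := Complex.im_le_norm _
    _ ≤ ∑ i, ∑ j, ‖(c i j : ℂ) * z i * (w j : ℂ)‖ := by
        refine (norm_sum_le _ _).trans (Finset.sum_le_sum fun i _ => ?_)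
        exact norm_sum_le _ _
    _ = ∑ i, ∑ j, |(c i j : ℝ)| * ‖z i‖ * |w j| := by
        refine Finset.sum_congr rfl fun i _ => Finset.sum_congr rfl fun j _ => ?_
        rw [norm_mul, norm_mul, Complex.norm_real, Real.norm_eq_abs]
        norm_cast
    _ ≤ ∑ i, ∑ j, |(c i j : ℝ)| * ‖z i‖ * ∑ j', |w j'| := by
        refine Finset.sum_le_sum fun i _ => Finset.sum_le_sum fun j _ => ?_
        refine mul_le_mul_of_nonneg_left ?_ (by positivity)
        exact Finset.single_le_sum (f := fun j' => |w j'|) (fun j' _ => abs_nonneg _)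
          (Finset.mem_univ j)
    _ = (∑ i, ∑ j, |(c i j : ℝ)| * ‖z i‖) * ∑ j, |w j| := by
        rw [Finset.sum_mul]
        exact Finset.sum_congr rfl fun i _ => by rw [Finset.sum_mul]

/-- The key pointwise transformation of a theta term under `z ↦ z + m₁ τ + m₂`. -/
lemma thetaTerm_shift {d : ℕ} (c : Matrix (Fin d) (Fin d) ℤ)
    (hsymm : ∀ i j, c i j = c j i) (τ : ℂ) (u : Fin d → ℝ)
    (hu : ∀ m : Fin d → ℤ, ∃ k : ℤ, betaRR c u (fun i => (m i : ℝ)) = k)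
    (z : Fin d → ℂ) (m₁ m₂ : Fin d → ℤ) (v : Fin d → ℤ) :
    thetaTerm c u τ (fun i => z i + (m₁ i : ℂ) * τ + (m₂ i : ℂ)) v =
      thetaTerm c u τ z (v - m₁) *
        Complex.exp (2 * Real.pi * Complex.I *
          (-betaCC c z (fun i => (m₁ i : ℂ)) - phiCC c (fun i => (m₁ i : ℂ)) * τ)) := by
  obtain ⟨k₀, hk₀⟩ := hu m₂
  set W : Fin d → ℂ := fun i => (u i : ℂ) + (v i : ℂ) with hWdef
  set M : Fin d → ℂ := fun i => (m₁ i : ℂ) with hMdef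
  set M₂ : Fin d → ℂ := fun i => (m₂ i : ℂ) with hM₂def
  -- the `u + (v - m₁)` vector is `W - M`
  have hW' : (fun i => (u i : ℂ) + (((v - m₁) i : ℤ) : ℂ)) = fun i => W i - M i := by
    funext i
    simp only [Pi.sub_apply, hWdef, hMdef]
    push_cast
    ring
  -- β(M₂, W) is an integer
  have hint : ∃ k : ℤ, betaCC c M₂ W = (k : ℂ) := by
    have hsplit : betaCC c M₂ W
        = betaCC c M₂ (fun i => (u i : ℂ)) + betaCC c M₂ (fun i => (v i : ℂ)) := by
      rw [hWdef, betaCC_add_right]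
    have h1 : betaCC c M₂ (fun i => (u i : ℂ)) = (k₀ : ℂ) := by
      rw [betaCC_comm c hsymm, hM₂def]
      have : (fun i => ((m₂ i : ℤ) : ℂ)) = fun i => (((m₂ i : ℝ) : ℝ) : ℂ) := by
        funext i; push_cast; rfl
      rw [this, betaCC_real, hk₀]
      push_cast
      rfl
    have h2 : betaCC c M₂ (fun i => (v i : ℂ))
        = ((∑ i, ∑ j, c i j * m₂ i * v j : ℤ) : ℂ) := betaCC_int_int c m₂ v
    exact ⟨k₀ + ∑ i, ∑ j, c i j * m₂ i * v j, by rw [hsplit, h1, h2]; push_cast; ring⟩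
  obtain ⟨k, hk⟩ := hint
  -- the exponent identity
  have hexp : (2 * (Real.pi:ℂ) * Complex.I *
        (-betaCC c (fun i => z i + M i * τ + M₂ i) W + phiCC c W * τ))
      = (2 * (Real.pi:ℂ) * Complex.I *
          (-betaCC c z (fun i => W i - M i) + phiCC c (fun i => W i - M i) * τ))
        + (2 * (Real.pi:ℂ) * Complex.I * (-betaCC c z M - phiCC c M * τ))
        + (-k : ℤ) * (2 * (Real.pi:ℂ) * Complex.I) := by
    have e1 : betaCC c (fun i => z i + M i * τ + M₂ i) W
        = betaCC c z W + τ * betaCC c M W + betaCC c M₂ W := by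
      rw [betaCC_add_left c (fun i => z i + M i * τ) M₂ W,
        betaCC_add_left c z (fun i => M i * τ) W, betaCC_smul_left]
    have e2 : betaCC c z (fun i => W i - M i) = betaCC c z W - betaCC c z M :=
      betaCC_sub_right c z W M
    have e3 : phiCC c (fun i => W i - M i)
        = phiCC c W - betaCC c M W + phiCC c M := phiCC_sub c hsymm W M
    rw [e1, e2, e3, hk]
    push_cast
    ring
  rw [thetaTerm, thetaTerm, hW', hexp, Complex.exp_add, Complex.exp_add,
    Complex.exp_int_mul_two_pi_mul_I, mul_one]

theorem stmt19 {d : ℕ} (c : Matrix (Fin d) (Fin d) ℤ)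
    (hsymm : ∀ i j, c i j = c j i) (heven : ∀ i, 2 ∣ c i i)
    (hpos : ∀ w : Fin d → ℝ, w ≠ 0 → 0 < betaRR c w w)
    (τ : ℂ) (hτ : 0 < τ.im)
    (u : Fin d → ℝ) (hu : ∀ m : Fin d → ℤ, ∃ k : ℤ, betaRR c u (fun i => (m i : ℝ)) = k) :
    (∀ z : Fin d → ℂ, Summable (fun v : Fin d → ℤ => ‖thetaTerm c u τ z v‖)) ∧
    (∀ (z : Fin d → ℂ) (m₁ m₂ : Fin d → ℤ),
      (∑' v : Fin d → ℤ, thetaTerm c u τ (fun i => z i + (m₁ i : ℂ) * τ + (m₂ i : ℂ)) v) =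
        (∑' v : Fin d → ℤ, thetaTerm c u τ z v) *
          Complex.exp (2 * Real.pi * Complex.I *
            (-betaCC c z (fun i => (m₁ i : ℂ)) - phiCC c (fun i => (m₁ i : ℂ)) * τ))) := by
  constructor
  · -- summability
    intro z
    obtain ⟨ε, hε, hbound⟩ := exists_posdef_bound c hpos
    set K : ℝ := ∑ i, ∑ j, |(c i j : ℝ)| * ‖z i‖ with hK
    have hK0 : 0 ≤ K := Finset.sum_nonneg fun i _ => Finset.sum_nonneg fun j _ => by
      positivity
    set a : ℝ := 2 * Real.pi * K with ha
    set b : ℝ := Real.pi * τ.im * ε with hb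
    have ha0 : 0 ≤ a := by positivity
    have hb0 : 0 < b := by positivity
    apply Summable.of_nonneg_of_le (fun v => norm_nonneg _) (fun v => ?_)
      (summable_pi_prod (fun j n => Real.exp (a * |u j + n| - b * (u j + n)^2))
        (fun j => summable_onedim ha0 hb0 (u j))
        (fun j n => (Real.exp_pos _).le))
    -- pointwise bound
    rw [norm_thetaTerm]
    set w : Fin d → ℝ := fun i => u i + v i with hw
    have h1 : (betaCC c z (fun i => (u i : ℂ) + (v i : ℂ))).im ≤ K * ∑ j, |w j| := by
      have : (fun i => ((u i : ℂ) + (v i : ℂ))) = fun i => ((w i : ℝ) : ℂ) := by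
        funext i; simp [hw]
      rw [this]
      exact im_betaCC_le c z w
    have h2 : ε * (∑ j, (w j)^2) ≤ betaRR c w w := hbound w
    have hstep : 2 * Real.pi * (betaCC c z (fun i => (u i : ℂ) + (v i : ℂ))).im
          - Real.pi * betaRR c w w * τ.im
        ≤ ∑ j, (a * |w j| - b * (w j)^2) := by
      have e : ∑ j, (a * |w j| - b * (w j)^2)
          = a * (∑ j, |w j|) - b * ∑ j, (w j)^2 := by
        rw [Finset.sum_sub_distrib, Finset.mul_sum, Finset.mul_sum]
      rw [e, ha, hb]
      have h3 : Real.pi * τ.im * ε * (∑ j, (w j)^2) ≤ Real.pi * betaRR c w w * τ.im := by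
        have := mul_le_mul_of_nonneg_left h2 (by positivity : (0:ℝ) ≤ Real.pi * τ.im)
        nlinarith
      have h4 : 2 * Real.pi * (betaCC c z (fun i => (u i : ℂ) + (v i : ℂ))).im
          ≤ 2 * Real.pi * K * ∑ j, |w j| := by
        have := mul_le_mul_of_nonneg_left h1 (by positivity : (0:ℝ) ≤ 2 * Real.pi)
        nlinarith
      linarith
    calc Real.exp (2 * Real.pi * (betaCC c z (fun i => (u i : ℂ) + (v i : ℂ))).im
            - Real.pi * betaRR c w w * τ.im)
        ≤ Real.exp (∑ j, (a * |w j| - b * (w j)^2)) := Real.exp_le_exp.mpr hstep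
      _ = ∏ j, Real.exp (a * |u j + v j| - b * (u j + v j)^2) := by
          rw [Real.exp_sum]
  · -- functional equation
    intro z m₁ m₂
    calc (∑' v : Fin d → ℤ, thetaTerm c u τ (fun i => z i + (m₁ i : ℂ) * τ + (m₂ i : ℂ)) v)
        = ∑' v : Fin d → ℤ, thetaTerm c u τ z (v - m₁) *
            Complex.exp (2 * Real.pi * Complex.I *
              (-betaCC c z (fun i => (m₁ i : ℂ)) - phiCC c (fun i => (m₁ i : ℂ)) * τ)) :=
          tsum_congr fun v => thetaTerm_shift c hsymm τ u hu z m₁ m₂ v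
      _ = (∑' v : Fin d → ℤ, thetaTerm c u τ z (v - m₁)) *
            Complex.exp (2 * Real.pi * Complex.I *
              (-betaCC c z (fun i => (m₁ i : ℂ)) - phiCC c (fun i => (m₁ i : ℂ)) * τ)) :=
          tsum_mul_right
      _ = (∑' v : Fin d → ℤ, thetaTerm c u τ z v) *
            Complex.exp (2 * Real.pi * Complex.I *
              (-betaCC c z (fun i => (m₁ i : ℂ)) - phiCC c (fun i => (m₁ i : ℂ)) * τ)) := by
          congr 1
          exact (Equiv.subRight m₁).tsum_eq (thetaTerm c u τ z)
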